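/- arXiv:2601.04884 — 4 statements merged into one kernel-verified Lean document; each statement's English description precedes it below -/
import Mathlib

section
/- For all real parameters ζ, α, β, Δ, the arrival-time function A[ζ, α, β, Δ] is monotone nondecreasing on the interval [ζ, β): for all t₁, t₂ ∈ ℝ with ζ ≤ t₁ ≤ t₂ < β, one has A[ζ, α, β, Δ](t₁) ≤ A[ζ, α, β, Δ](t₂) (the FIFO property: departing later never yields an earlier arrival). -/
/-- The arrival-time function `A[ζ, α, β, Δ] : ℝ → WithTop ℝ`:
`⊤` if `t < ζ`; `α + Δ` if `ζ ≤ t < min α β`; `t + Δ` if `α ≤ t < β`; `⊤` if `β ≤ t`. -/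
noncomputable def atf (ζ α β Δ : ℝ) (t : ℝ) : WithTop ℝ :=
  if t < ζ then ⊤
  else if t < min α β then ((α + Δ : ℝ) : WithTop ℝ)
  else if t < β then ((t + Δ : ℝ) : WithTop ℝ)
  else ⊤

/-- FIFO property: on `[ζ, β)` the arrival-time function is monotone nondecreasing. -/
theorem atf_mono (ζ α β Δ : ℝ) (t₁ t₂ : ℝ)
    (h₁ : ζ ≤ t₁) (h₁₂ : t₁ ≤ t₂) (h₂ : t₂ < β) :
    atf ζ α β Δ t₁ ≤ atf ζ α β Δ t₂ := by
  have h₁' : ¬ t₁ < ζ := not_lt.2 h₁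
  have h₂' : ¬ t₂ < ζ := not_lt.2 (h₁.trans h₁₂)
  have hb₁ : t₁ < β := lt_of_le_of_lt h₁₂ h₂
  unfold atf
  rw [if_neg h₁', if_neg h₂', if_pos hb₁, if_pos h₂]
  by_cases hm₂ : t₂ < min α β
  · rw [if_pos (lt_of_le_of_lt h₁₂ hm₂), if_pos hm₂]
  · rw [if_neg hm₂]
    have hα₂ : α ≤ t₂ := by
      have hmin : min α β ≤ t₂ := not_lt.1 hm₂
      rcases le_or_gt α β with h | h
      · rwa [min_eq_left h] at hmin
      · rw [min_eq_right h.le] at hmin; linarith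
    by_cases hm₁ : t₁ < min α β
    · rw [if_pos hm₁]
      exact WithTop.coe_le_coe.2 (by linarith)
    · rw [if_neg hm₁]
      exact WithTop.coe_le_coe.2 (by linarith)
end

section
/- Let ζ, α, β, Δ, f be real numbers with α ≤ β and f ≥ 0. Then for every t ∈ ℝ, the pointwise minimum of the original arrival-time function A[ζ, α, β, Δ] and the flexible arrival-time function A[ζ, β, β + f, Δ] equals the single extended arrival-time function A[ζ, α, β + f, Δ]: min(A[ζ, α, β, Δ](t), A[ζ, β, β + f, Δ](t)) = A[ζ, α, β + f, Δ](t). In particular, adding flexibility f extends the safe departure window from [α, β) to [α, β + f). -/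
/-- Adding flexibility `f ≥ 0` extends the safe departure window from `[α, β)` to
`[α, β + f)`: the pointwise minimum of the original ATF and the flexible ATF
`A[ζ, β, β + f, Δ]` equals the single extended ATF `A[ζ, α, β + f, Δ]`. -/
theorem atf_min_flexible (ζ α β Δ f : ℝ) (hαβ : α ≤ β) (hf : 0 ≤ f) (t : ℝ) :
    min (atf ζ α β Δ t) (atf ζ β (β + f) Δ t) = atf ζ α (β + f) Δ t := by
  unfold atf
  split_ifs with h1 h2 h3 h4 h5 h6 h7 h8 h9 h10 h11 h12 h13 h14 h15 <;>
    simp_all [min_def, WithTop.coe_le_coe] <;>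
    split_ifs at * <;>
    (try simp_all) <;>
    (try intro _) <;>
    (try simp only [← WithTop.coe_add, WithTop.coe_lt_coe] at *) <;>
    (try norm_cast) <;>
    linarith
end

section
/- Maximality of flexibility: assume the trajectory is valid, t_n ≤ t_max, and b_i ≥ t_i for all i. Fix an index j and a delay d > f_j, and define the shifted arrival times t'_i for j ≤ i ≤ n by t'_j = t_j + d and t'_{i+1} = max(t_{i+1}, t'_i + δ(x_i, x_{i+1})). Then the delayed execution is unsafe: either t'_n > t_max, or there exists an index i with j ≤ i ≤ n such that t'_i > b_i (the agent would arrive at configuration x_i after another agent's next visit, violating the visiting order). -/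
/-- Maximality of flexibility: delaying an agent at configuration `x j` by any
`d > f j`, with minimally shifted subsequent arrival times, is unsafe: either the
goal is reached after the scenario end time, or some configuration is reached after
another agent's next visit. -/
theorem flexibility_maximal {X : Type*} (n : ℕ) (hn : 1 ≤ n)
    (x : ℕ → X) (t : ℕ → ℝ) (δ : X → X → ℝ)
    (hδ : ∀ a b, 0 ≤ δ a b)
    (hvalid : ∀ i, 1 ≤ i → i < n → t i + δ (x i) (x (i + 1)) ≤ t (i + 1))
    (tmax : ℝ) (htmax : t n ≤ tmax)
    (b : ℕ → ℝ) (hb : ∀ i, 1 ≤ i → i ≤ n → t i ≤ b i)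
    (f : ℕ → ℝ)
    (hfn : f n = tmax - t n)
    (hf : ∀ i, 1 ≤ i → i < n →
      f i = min (t (i + 1) - t i - δ (x i) (x (i + 1)) + f (i + 1)) (b i - t i))
    (j : ℕ) (hj1 : 1 ≤ j) (hjn : j ≤ n)
    (d : ℝ) (hd : f j < d)
    (t' : ℕ → ℝ)
    (ht'j : t' j = t j + d)
    (ht' : ∀ i, j ≤ i → i < n →
      t' (i + 1) = max (t (i + 1)) (t' i + δ (x i) (x (i + 1)))) :
    tmax < t' n ∨ ∃ i, j ≤ i ∧ i ≤ n ∧ b i < t' i := by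
  by_contra h
  push_neg at h
  obtain ⟨h1, h2⟩ := h
  have key : ∀ i, j ≤ i → i ≤ n → f i < t' i - t i := by
    intro i hji
    induction i, hji using Nat.le_induction with
    | base =>
      intro _
      rw [ht'j]; linarith
    | succ i hji ih =>
      intro hin
      have hin' : i < n := Nat.lt_of_succ_le hin
      have hi1 : 1 ≤ i := le_trans hj1 hji
      have hfi := hf i hi1 hin'
      have hbi := h2 i hji (le_of_lt hin')
      have ihv := ih (le_of_lt hin')
      have hA : f i = t (i + 1) - t i - δ (x i) (x (i + 1)) + f (i + 1) := by
        rcases min_choice (t (i + 1) - t i - δ (x i) (x (i + 1)) + f (i + 1)) (b i - t i) with hc | hc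
        · rw [hfi, hc]
        · exfalso; rw [hfi, hc] at ihv; linarith
      have ht'succ := ht' i hji hin'
      have hmax : t' i + δ (x i) (x (i + 1)) ≤ t' (i + 1) := by
        rw [ht'succ]; exact le_max_right _ _
      linarith
  have hkn := key n hjn le_rfl
  rw [hfn] at hkn
  exact absurd h1 (not_le.mpr (by linarith))
end

section
/- Closed form for minimally shifted arrival times: assume the trajectory is valid, fix an index j and a delay d ≥ 0, and define the shifted arrival times t'_i for j ≤ i ≤ n by t'_j = t_j + d and t'_{i+1} = max(t_{i+1}, t'_i + δ(x_i, x_{i+1})). Then for all j ≤ i ≤ n, t'_i = max( t_i, t_j + d + Σ_{k=j}^{i−1} δ(x_k, x_{k+1}) ). -/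
/-- Closed form for the minimally shifted arrival times: along a valid trajectory,
delaying by `d ≥ 0` at index `j` and shifting minimally gives
`t' i = max (t i) (t j + d + Σ_{k=j}^{i-1} δ (x k) (x (k+1)))` for all `j ≤ i ≤ n`. -/
theorem shifted_arrival_closed_form {X : Type*} (n : ℕ)
    (x : ℕ → X) (t : ℕ → ℝ) (δ : X → X → ℝ)
    (hδ : ∀ a b, 0 ≤ δ a b)
    (hvalid : ∀ i, 1 ≤ i → i < n → t i + δ (x i) (x (i + 1)) ≤ t (i + 1))
    (j : ℕ) (hj1 : 1 ≤ j) (hjn : j ≤ n)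
    (d : ℝ) (hd : 0 ≤ d)
    (t' : ℕ → ℝ)
    (ht'j : t' j = t j + d)
    (ht' : ∀ i, j ≤ i → i < n →
      t' (i + 1) = max (t (i + 1)) (t' i + δ (x i) (x (i + 1)))) :
    ∀ i, j ≤ i → i ≤ n →
      t' i = max (t i) (t j + d + ∑ k ∈ Finset.Ico j i, δ (x k) (x (k + 1))) := by
  intro i hji hin
  induction i with
  | zero => omega
  | succ i ih =>
    rcases eq_or_lt_of_le hji with h | h
    · subst h
      simp [ht'j, max_eq_right (by linarith : t (i+1) ≤ t (i+1) + d)]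
    · have hji' : j ≤ i := by omega
      have hin' : i < n := by omega
      rw [ht' i hji' hin', ih hji' (le_of_lt hin'),
        Finset.sum_Ico_succ_top hji']
      have hv := hvalid i (by omega) hin'
      rw [← max_add_add_right]
      rw [← max_assoc, max_eq_left hv]
      rw [add_assoc]
end
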